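/- arXiv:1503.02707 — 5 statements merged into one kernel-verified Lean document; each statement's English description precedes it below -/
import Mathlib

section
/- Let X be a fuzzy Riesz space with fuzzy order μ. If a net (x_α)_{α∈A} converges in fuzzy order to x, a net (y_β)_{β∈B} converges in fuzzy order to y, and a, b are real numbers, then the net (a·x_α + b·y_β) indexed by the product directed set A×B converges in fuzzy order to a·x + b·y. -/
/-- A fuzzy Riesz space structure on a real vector space `X`:
a fuzzy order `μ : X × X → [0,1]` compatible with the vector structure,
together with binary suprema and infima with respect to the fuzzy order. -/
structure FuzzyRiesz (X : Type*) [AddCommGroup X] [Module ℝ X] where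
  μ : X → X → ℝ
  nonneg : ∀ x y : X, 0 ≤ μ x y
  le_one : ∀ x y : X, μ x y ≤ 1
  refl : ∀ x : X, μ x x = 1
  antisymm : ∀ x y : X, 1 < μ x y + μ y x → x = y
  trans : ∀ x y z : X, min (μ x y) (μ y z) ≤ μ x z
  add_compat : ∀ x y z : X, 1/2 < μ x y → μ x y ≤ μ (x + z) (y + z)
  smul_compat : ∀ (x y : X) (c : ℝ), 0 ≤ c → 1/2 < μ x y → μ x y ≤ μ (c • x) (c • y)
  sup : X → X → X
  inf : X → X → X
  le_sup_left : ∀ x y : X, 1/2 < μ x (sup x y)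
  le_sup_right : ∀ x y : X, 1/2 < μ y (sup x y)
  sup_le : ∀ x y z : X, 1/2 < μ x z → 1/2 < μ y z → 1/2 < μ (sup x y) z
  inf_le_left : ∀ x y : X, 1/2 < μ (inf x y) x
  inf_le_right : ∀ x y : X, 1/2 < μ (inf x y) y
  le_inf : ∀ x y z : X, 1/2 < μ z x → 1/2 < μ z y → 1/2 < μ z (inf x y)

namespace FuzzyRiesz

universe v

variable {X : Type*} [AddCommGroup X] [Module ℝ X]

/-- The absolute value `|x| = x ∨ (−x)`. -/
def fabs (F : FuzzyRiesz X) (x : X) : X := F.sup x (-x)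

/-- `x` is positive: `μ(0,x) > 1/2`. -/
def Pos (F : FuzzyRiesz X) (x : X) : Prop := 1/2 < F.μ 0 x

/-- `S⁺`, the set of positive elements of `S`. -/
def posPart (F : FuzzyRiesz X) (S : Set X) : Set X := {x ∈ S | F.Pos x}

/-- `y` is an upper bound of `A`. -/
def UpperBound (F : FuzzyRiesz X) (A : Set X) (y : X) : Prop := ∀ x ∈ A, 1/2 < F.μ x y

/-- `y` is a lower bound of `A`. -/
def LowerBound (F : FuzzyRiesz X) (A : Set X) (y : X) : Prop := ∀ x ∈ A, 1/2 < F.μ y x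

/-- `z = sup A` in the fuzzy order. -/
def IsSup (F : FuzzyRiesz X) (A : Set X) (z : X) : Prop :=
  F.UpperBound A z ∧ ∀ y : X, F.UpperBound A y → 1/2 < F.μ z y

/-- `z = inf A` in the fuzzy order. -/
def IsInf (F : FuzzyRiesz X) (A : Set X) (z : X) : Prop :=
  F.LowerBound A z ∧ ∀ y : X, F.LowerBound A y → 1/2 < F.μ y z

/-- `z = inf A`, computed relative to the subset `Y` (lower bounds taken in `Y`). -/
def IsInfIn (F : FuzzyRiesz X) (Y A : Set X) (z : X) : Prop :=
  F.LowerBound A z ∧ ∀ y ∈ Y, F.LowerBound A y → 1/2 < F.μ y z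

/-- A set is fuzzy solid if `μ(|x|,|y|) > 1/2` and `y ∈ A` imply `x ∈ A`. -/
def Solid (F : FuzzyRiesz X) (A : Set X) : Prop :=
  ∀ x y : X, 1/2 < F.μ (F.fabs x) (F.fabs y) → y ∈ A → x ∈ A

/-- A fuzzy ideal: a fuzzy solid vector subspace. -/
structure IsIdeal (F : FuzzyRiesz X) (I : Set X) : Prop where
  zero_mem : (0 : X) ∈ I
  add_mem : ∀ {x y : X}, x ∈ I → y ∈ I → x + y ∈ I
  smul_mem : ∀ (c : ℝ) {x : X}, x ∈ I → c • x ∈ I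
  solid : ∀ x y : X, 1/2 < F.μ (F.fabs x) (F.fabs y) → y ∈ I → x ∈ I

/-- A fuzzy ideal of the subspace `Y` (with the restricted fuzzy order and
vector structure): a vector subspace of `Y` that is solid relative to `Y`. -/
structure IsIdealIn (F : FuzzyRiesz X) (Y I : Set X) : Prop where
  subset : I ⊆ Y
  zero_mem : (0 : X) ∈ I
  add_mem : ∀ {x y : X}, x ∈ I → y ∈ I → x + y ∈ I
  smul_mem : ∀ (c : ℝ) {x : X}, x ∈ I → c • x ∈ I
  solid : ∀ x ∈ Y, ∀ y ∈ I, 1/2 < F.μ (F.fabs x) (F.fabs y) → x ∈ I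

/-- A decreasing net. -/
def Decreasing (F : FuzzyRiesz X) {ι : Type v} [Preorder ι] (y : ι → X) : Prop :=
  ∀ a b : ι, a ≤ b → 1/2 < F.μ (y b) (y a)

/-- An increasing net. -/
def Increasing (F : FuzzyRiesz X) {ι : Type v} [Preorder ι] (x : ι → X) : Prop :=
  ∀ a b : ι, a ≤ b → 1/2 < F.μ (x a) (x b)

/-- The net `x` converges in fuzzy order to `l`: there is a net `y` over the same
index set with `μ(|x_α − l|, y_α) > 1/2` for all `α` and `y_α ↓ 0`. -/
def FuzzyOrderConv (F : FuzzyRiesz X) {ι : Type v} [Preorder ι] (x : ι → X) (l : X) : Prop :=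
  ∃ y : ι → X, (∀ a, 1/2 < F.μ (F.fabs (x a - l)) (y a)) ∧ F.Decreasing y ∧
    F.IsInf (Set.range y) 0

/-- Fuzzy order convergence relative to the subset `Y` (the dominating net lies in `Y`
and its infimum is computed in `Y`). -/
def FuzzyOrderConvIn (F : FuzzyRiesz X) (Y : Set X) {ι : Type v} [Preorder ι]
    (x : ι → X) (l : X) : Prop :=
  ∃ y : ι → X, (∀ a, y a ∈ Y) ∧ (∀ a, 1/2 < F.μ (F.fabs (x a - l)) (y a)) ∧ F.Decreasing y ∧
    F.IsInfIn Y (Set.range y) 0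

/-- `S` is fuzzy σ-order closed: closed under fuzzy order limits of sequences in `S`. -/
def SigmaOrderClosed (F : FuzzyRiesz X) (S : Set X) : Prop :=
  ∀ (x : ℕ → X) (l : X), (∀ n, x n ∈ S) → F.FuzzyOrderConv x l → l ∈ S

/-- `S` is fuzzy order closed: closed under fuzzy order limits of nets in `S`. -/
def OrderClosed (F : FuzzyRiesz X) (S : Set X) : Prop :=
  ∀ (ι : Type v) [Preorder ι] [Nonempty ι] [IsDirected ι (· ≤ ·)],
    ∀ (x : ι → X) (l : X), (∀ a, x a ∈ S) → F.FuzzyOrderConv x l → l ∈ S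

/-- `S` is fuzzy order closed in the subspace `Y`. -/
def OrderClosedIn (F : FuzzyRiesz X) (Y S : Set X) : Prop :=
  ∀ (ι : Type v) [Preorder ι] [Nonempty ι] [IsDirected ι (· ≤ ·)],
    ∀ (x : ι → X) (l : X), (∀ a, x a ∈ S) → l ∈ Y → F.FuzzyOrderConvIn Y x l → l ∈ S

/-- A fuzzy band: a fuzzy order closed fuzzy ideal. -/
def IsBand (F : FuzzyRiesz X) (B : Set X) : Prop := F.IsIdeal B ∧ OrderClosed.{v} F B

/-- A fuzzy band of the subspace `Y`. -/
def IsBandIn (F : FuzzyRiesz X) (Y B : Set X) : Prop := F.IsIdealIn Y B ∧ OrderClosedIn.{v} F Y B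

/-- The disjoint complement `A^d = {x : |x| ∧ |y| = 0 for all y ∈ A}`. -/
def dcomp (F : FuzzyRiesz X) (A : Set X) : Set X :=
  {x : X | ∀ y ∈ A, F.inf (F.fabs x) (F.fabs y) = 0}

/-- The algebraic sum of two subsets. -/
def sumSet (A B : Set X) : Set X := {z : X | ∃ a ∈ A, ∃ b ∈ B, z = a + b}

/-- `S` is fuzzy order dense in `X`. -/
def OrderDense (F : FuzzyRiesz X) (S : Set X) : Prop :=
  ∀ x : X, x ≠ 0 → F.Pos x → ∃ y ∈ S, y ≠ 0 ∧ 1/2 < F.μ y x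

/-- `S` is fuzzy order dense in the subspace `Y`. -/
def OrderDenseIn (F : FuzzyRiesz X) (Y S : Set X) : Prop :=
  ∀ x ∈ Y, x ≠ 0 → F.Pos x → ∃ y ∈ S, y ≠ 0 ∧ 1/2 < F.μ y x

/-- `x` is nonnegative: it is not the case that `μ(x,0) > 1/2`. -/
def Nonneg (F : FuzzyRiesz X) (x : X) : Prop := ¬ (1/2 < F.μ x 0)

/-- `X` is fuzzy Archimedean: for every nonzero nonnegative `x`, the set
`{λ • x : λ > 0}` has no upper bound. -/
def FuzzyArchimedean (F : FuzzyRiesz X) : Prop :=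
  ∀ x : X, x ≠ 0 → F.Nonneg x →
    ¬ ∃ y : X, F.UpperBound {z : X | ∃ c : ℝ, 0 < c ∧ z = c • x} y

/-- `X` is fuzzy Dedekind complete. -/
def DedekindComplete (F : FuzzyRiesz X) : Prop :=
  ∀ A : Set X, A.Nonempty → (∃ y, F.UpperBound A y) → ∃ z, F.IsSup A z

/-- `X` is fuzzy Dedekind σ-complete. -/
def DedekindSigmaComplete (F : FuzzyRiesz X) : Prop :=
  ∀ A : Set X, A.Nonempty → A.Countable →
    ((∃ y, F.UpperBound A y) → ∃ z, F.IsSup A z) ∧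
    ((∃ y, F.LowerBound A y) → ∃ z, F.IsInf A z)

/-- `D` is directed to the right. -/
def DirectedRight (F : FuzzyRiesz X) (D : Set X) : Prop :=
  ∀ E : Set X, E ⊆ D → E.Finite → ∃ d ∈ D, ∀ e ∈ E, 1/2 < F.μ e d

/-- `B` is a fuzzy projection band: a fuzzy band such that every `x ∈ X` decomposes
uniquely as `x = x₁ + x₂` with `x₁ ∈ B`, `x₂ ∈ B^d`. -/
def IsProjBand (F : FuzzyRiesz X) (B : Set X) : Prop :=
  IsBand.{v} F B ∧ ∀ x : X, ∃! p : X × X, p.1 ∈ B ∧ p.2 ∈ F.dcomp B ∧ x = p.1 + p.2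

/-- There is an increasing net of elements of `S`, over some nonempty directed
preordered index set, whose supremum is `l`. -/
def IncNetSup (F : FuzzyRiesz X) (S : Set X) (l : X) : Prop :=
  ∃ (ι : Type v) (r : ι → ι → Prop), Nonempty ι ∧ (∀ a, r a a) ∧
    (∀ a b c, r a b → r b c → r a c) ∧ (∀ a b, ∃ c, r a c ∧ r b c) ∧
    ∃ net : ι → X, (∀ a, net a ∈ S) ∧ (∀ a b, r a b → 1/2 < F.μ (net a) (net b)) ∧
      F.IsSup (Set.range net) l

end FuzzyRiesz

universe u w

section Helpers

variable {X : Type*} [AddCommGroup X] [Module ℝ X] (F : FuzzyRiesz X)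

lemma fle_trans {x y z : X} (h1 : 1/2 < F.μ x y) (h2 : 1/2 < F.μ y z) :
    1/2 < F.μ x z :=
  lt_of_lt_of_le (lt_min h1 h2) (F.trans x y z)

lemma fle_add_right {x y : X} (h : 1/2 < F.μ x y) (z : X) :
    1/2 < F.μ (x + z) (y + z) :=
  lt_of_lt_of_le h (F.add_compat x y z h)

lemma fle_smul {x y : X} (c : ℝ) (hc : 0 ≤ c) (h : 1/2 < F.μ x y) :
    1/2 < F.μ (c • x) (c • y) :=
  lt_of_lt_of_le h (F.smul_compat x y c hc h)

lemma fle_add {x y z w : X} (h1 : 1/2 < F.μ x y) (h2 : 1/2 < F.μ z w) :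
    1/2 < F.μ (x + z) (y + w) := by
  have a1 := fle_add_right F h1 z
  have a2 := fle_add_right F h2 y
  rw [add_comm z y, add_comm w y] at a2
  exact fle_trans F a1 a2

lemma fle_fabs_add (x y : X) :
    1/2 < F.μ (F.fabs (x + y)) (F.fabs x + F.fabs y) := by
  apply F.sup_le
  · exact fle_add F (F.le_sup_left x (-x)) (F.le_sup_left y (-y))
  · rw [neg_add]
    exact fle_add F (F.le_sup_right x (-x)) (F.le_sup_right y (-y))

lemma fle_fabs_smul (c : ℝ) (x : X) :
    1/2 < F.μ (F.fabs (c • x)) (|c| • F.fabs x) := by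
  apply F.sup_le
  · rcases le_or_gt 0 c with hc | hc
    · rw [abs_of_nonneg hc]
      exact fle_smul F c hc (F.le_sup_left x (-x))
    · rw [abs_of_neg hc]
      have e : c • x = (-c) • (-x) := by simp
      rw [e]
      exact fle_smul F (-c) (by linarith) (F.le_sup_right x (-x))
  · rcases le_or_gt 0 c with hc | hc
    · rw [abs_of_nonneg hc]
      have e : -(c • x) = c • (-x) := by simp
      rw [e]
      exact fle_smul F c hc (F.le_sup_right x (-x))
    · rw [abs_of_neg hc]
      have e : -(c • x) = (-c) • x := by simp
      rw [e]
      exact fle_smul F (-c) (by linarith) (F.le_sup_left x (-x))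

lemma isInf_zero_smul {ι : Type*} [Nonempty ι] (u : ι → X) (c : ℝ) (hc : 0 ≤ c)
    (h : F.IsInf (Set.range u) 0) :
    F.IsInf (Set.range (fun i => c • u i)) 0 := by
  constructor
  · rintro t ⟨i, rfl⟩
    have h0 : 1/2 < F.μ 0 (u i) := h.1 (u i) ⟨i, rfl⟩
    have h1 := fle_smul F c hc h0
    simpa using h1
  · intro y hy
    rcases eq_or_lt_of_le hc with hc0 | hc'
    · obtain ⟨i⟩ := ‹Nonempty ι›
      have := hy (c • u i) ⟨i, rfl⟩
      rw [← hc0, zero_smul] at this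
      exact this
    · have hy' : F.LowerBound (Set.range u) (c⁻¹ • y) := by
        rintro t ⟨i, rfl⟩
        have h1 := hy (c • u i) ⟨i, rfl⟩
        have h2 := fle_smul F c⁻¹ (by positivity) h1
        rwa [smul_smul, inv_mul_cancel₀ hc'.ne', one_smul] at h2
      have h3 := h.2 _ hy'
      have h4 := fle_smul F c hc h3
      rwa [smul_smul, mul_inv_cancel₀ hc'.ne', one_smul, smul_zero] at h4

end Helpers

/-- If `x_α → xl` and `y_β → yl` in fuzzy order, then the net
`a • x_α + b • y_β` over the product directed set converges in fuzzy order
to `a • xl + b • yl`. -/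
theorem fuzzyOrderConv_smul_add {X : Type*} [AddCommGroup X] [Module ℝ X]
    (F : FuzzyRiesz X) {A : Type u} {B : Type w} [Preorder A] [Preorder B]
    [Nonempty A] [Nonempty B] [IsDirected A (· ≤ ·)] [IsDirected B (· ≤ ·)]
    (x : A → X) (y : B → X) (xl yl : X) (a b : ℝ)
    (hx : F.FuzzyOrderConv x xl) (hy : F.FuzzyOrderConv y yl) :
    F.FuzzyOrderConv (fun p : A × B => a • x p.1 + b • y p.2) (a • xl + b • yl) := by
  obtain ⟨u, hu1, hu2, hu3⟩ := hx
  obtain ⟨v, hv1, hv2, hv3⟩ := hy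
  refine ⟨fun p => |a| • u p.1 + |b| • v p.2, ?_, ?_, ?_⟩
  · intro p
    have e : a • x p.1 + b • y p.2 - (a • xl + b • yl)
        = a • (x p.1 - xl) + b • (y p.2 - yl) := by
      simp only [smul_sub]; abel
    rw [e]
    refine fle_trans F (fle_fabs_add F _ _) ?_
    refine fle_trans F (fle_add F (fle_fabs_smul F a _) (fle_fabs_smul F b _)) ?_
    exact fle_add F (fle_smul F _ (abs_nonneg a) (hu1 p.1))
      (fle_smul F _ (abs_nonneg b) (hv1 p.2))
  · intro p q hpq
    exact fle_add F (fle_smul F _ (abs_nonneg a) (hu2 p.1 q.1 hpq.1))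
      (fle_smul F _ (abs_nonneg b) (hv2 p.2 q.2 hpq.2))
  · have hu3' := isInf_zero_smul F u |a| (abs_nonneg a) hu3
    have hv3' := isInf_zero_smul F v |b| (abs_nonneg b) hv3
    constructor
    · rintro t ⟨p, rfl⟩
      have h1 := hu3'.1 _ ⟨p.1, rfl⟩
      have h2 := hv3'.1 _ ⟨p.2, rfl⟩
      have h3 := fle_add F h1 h2
      simpa using h3
    · intro z hz
      have key : ∀ β, 1/2 < F.μ z (|b| • v β) := by
        intro β
        have hlb : F.LowerBound (Set.range (fun α => |a| • u α)) (z - |b| • v β) := by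
          rintro t ⟨α, rfl⟩
          have h1 := hz (|a| • u α + |b| • v β) ⟨(α, β), rfl⟩
          have h2 := fle_add_right F h1 (-(|b| • v β))
          have e1 : (|a| • u α + |b| • v β) + -(|b| • v β) = |a| • u α := by abel
          have e2 : z + -(|b| • v β) = z - |b| • v β := by abel
          rwa [e1, e2] at h2
        have h3 := hu3'.2 _ hlb
        have h4 := fle_add_right F h3 (|b| • v β)
        have e3 : z - |b| • v β + |b| • v β = z := by abel
        rwa [e3, zero_add] at h4
      have hlb2 : F.LowerBound (Set.range (fun β => |b| • v β)) z := by
        rintro t ⟨β, rfl⟩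
        exact key β
      exact hv3'.2 _ hlb2
end

section
/- Let S be a fuzzy solid subset of a fuzzy Riesz space X. Then: (i) S is fuzzy σ-order closed if and only if for every increasing sequence (x_n) of positive elements of S with x_n ↑ x one has x ∈ S; (ii) S is fuzzy order closed if and only if for every increasing net (x_α) of positive elements of S with x_α ↑ x one has x ∈ S. -/
universe u

namespace FuzzyRiesz

variable {X : Type*} [AddCommGroup X] [Module ℝ X] (F : FuzzyRiesz X)

lemma lle_refl (x : X) : 1/2 < F.μ x x := by rw [F.refl]; norm_num

lemma lle_trans {x y z : X} (h1 : 1/2 < F.μ x y) (h2 : 1/2 < F.μ y z) :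
    1/2 < F.μ x z := lt_of_lt_of_le (lt_min h1 h2) (F.trans x y z)

lemma lle_antisymm {x y : X} (h1 : 1/2 < F.μ x y) (h2 : 1/2 < F.μ y x) : x = y :=
  F.antisymm x y (by linarith)

lemma lle_add {x y : X} (z : X) (h : 1/2 < F.μ x y) : 1/2 < F.μ (x + z) (y + z) :=
  lt_of_lt_of_le h (F.add_compat x y z h)

lemma lle_neg {x y : X} (h : 1/2 < F.μ x y) : 1/2 < F.μ (-y) (-x) := by
  have h2 := F.lle_add (-x - y) h
  rw [show x + (-x - y) = -y by abel, show y + (-x - y) = -x by abel] at h2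
  exact h2

lemma lle_add_le_add {a b c d : X} (h1 : 1/2 < F.μ a b) (h2 : 1/2 < F.μ c d) :
    1/2 < F.μ (a + c) (b + d) := by
  have t1 := F.lle_add c h1
  have t2 := F.lle_add b h2
  rw [show c + b = b + c by abel, show d + b = b + d by abel] at t2
  exact F.lle_trans t1 t2

lemma lle_half_smul {x : X} (h : 1/2 < F.μ 0 (x + x)) : 1/2 < F.μ 0 x := by
  have h2 := F.smul_compat 0 (x + x) (1/2) (by norm_num) h
  have e : (1/2 : ℝ) • (x + x) = x := by
    rw [show x + x = (2:ℝ) • x from (two_smul ℝ x).symm, smul_smul]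
    norm_num
  rw [smul_zero, e] at h2
  exact lt_of_lt_of_le h h2

lemma fabs_nonneg (x : X) : 1/2 < F.μ 0 (F.fabs x) := by
  have h1 : 1/2 < F.μ x (F.fabs x) := F.le_sup_left x (-x)
  have h2 : 1/2 < F.μ (-x) (F.fabs x) := F.le_sup_right x (-x)
  have h3 := F.lle_add_le_add h1 h2
  rw [show x + -x = (0:X) by abel] at h3
  exact F.lle_half_smul h3

lemma fabs_le {x a : X} (h1 : 1/2 < F.μ x a) (h2 : 1/2 < F.μ (-x) a) :
    1/2 < F.μ (F.fabs x) a := F.sup_le x (-x) a h1 h2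

lemma le_fabs (x : X) : 1/2 < F.μ x (F.fabs x) := F.le_sup_left x (-x)

lemma neg_le_fabs (x : X) : 1/2 < F.μ (-x) (F.fabs x) := F.le_sup_right x (-x)

lemma sup_comm' (x y : X) : F.sup x y = F.sup y x := by
  have h1 : 1/2 < F.μ (F.sup x y) (F.sup y x) :=
    F.sup_le _ _ _ (F.le_sup_right y x) (F.le_sup_left y x)
  have h2 : 1/2 < F.μ (F.sup y x) (F.sup x y) :=
    F.sup_le _ _ _ (F.le_sup_right x y) (F.le_sup_left x y)
  exact F.lle_antisymm h1 h2

lemma fabs_neg (x : X) : F.fabs (-x) = F.fabs x := by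
  unfold fabs; rw [neg_neg, F.sup_comm']

lemma fabs_triangle (u v : X) : 1/2 < F.μ (F.fabs (u + v)) (F.fabs u + F.fabs v) := by
  apply F.fabs_le
  · exact F.lle_add_le_add (F.le_fabs u) (F.le_fabs v)
  · rw [neg_add]
    exact F.lle_add_le_add (F.neg_le_fabs u) (F.neg_le_fabs v)

/-- Forward direction construction: an increasing net with supremum `l`
converges in fuzzy order to `l`, witnessed by `y a = l - x a`. -/
lemma conv_of_sup {ι : Type*} [Preorder ι] (x : ι → X) (l : X)
    (hinc : F.Increasing x) (hsup : F.IsSup (Set.range x) l) :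
    F.FuzzyOrderConv x l := by
  have hub : ∀ a, 1/2 < F.μ (x a) l := fun a => hsup.1 (x a) ⟨a, rfl⟩
  refine ⟨fun a => l - x a, ?_, ?_, ?_, ?_⟩
  · intro a
    apply F.fabs_le
    · -- x a - l ≤ l - x a  since  x a - l ≤ 0 ≤ l - x a
      have h1 : 1/2 < F.μ (x a - l) 0 := by
        have := F.lle_add (-l) (hub a)
        rw [show l + -l = (0:X) by abel, show x a + -l = x a - l by abel] at this
        exact this
      have h2 : 1/2 < F.μ 0 (l - x a) := by
        have := F.lle_add (-x a) (hub a)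
        rw [show x a + -x a = (0:X) by abel, show l + -x a = l - x a by abel] at this
        exact this
      exact F.lle_trans h1 h2
    · rw [neg_sub]; exact F.lle_refl _
  · intro a b hab
    have := F.lle_neg (hinc a b hab)
    have h2 := F.lle_add l this
    rw [show -x b + l = l - x b by abel, show -x a + l = l - x a by abel] at h2
    exact h2
  · rintro z ⟨a, rfl⟩
    have := F.lle_add (-x a) (hub a)
    rw [show x a + -x a = (0:X) by abel, show l + -x a = l - x a by abel] at this
    exact this
  · intro u hu
    have hub' : F.UpperBound (Set.range x) (l - u) := by
      rintro z ⟨a, rfl⟩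
      have h := hu (l - x a) ⟨a, rfl⟩
      have h2 := F.lle_add (x a - u) h
      rw [show u + (x a - u) = x a by abel, show l - x a + (x a - u) = l - u by abel] at h2
      exact h2
    have h := hsup.2 (l - u) hub'
    have h2 := F.lle_add (u - l) h
    rw [show l + (u - l) = u by abel, show l - u + (u - l) = (0:X) by abel] at h2
    exact h2

/-- Backward direction: if `x` converges in fuzzy order to `l` within a solid set
`S`, and `S` contains the suprema of increasing positive nets (over the same index
type) of its elements, then `l ∈ S`. -/
lemma mem_of_conv {ι : Type*} [Preorder ι] {S : Set X} (hS : F.Solid S)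
    (x : ι → X) (l : X) (hmem : ∀ a, x a ∈ S) (hconv : F.FuzzyOrderConv x l)
    (H : ∀ (b : ι → X) (m : X), (∀ a, b a ∈ S ∧ F.Pos (b a)) → F.Increasing b →
      F.IsSup (Set.range b) m → m ∈ S) : l ∈ S := by
  obtain ⟨y, hdom, hdec, hinf⟩ := hconv
  have hy0 : ∀ a, 1/2 < F.μ 0 (y a) := fun a => hinf.1 (y a) ⟨a, rfl⟩
  set b : ι → X := fun a => F.sup (F.fabs l - y a) 0 with hb
  -- fabs l - y a ≤ fabs (x a)
  have key : ∀ a, 1/2 < F.μ (F.fabs l - y a) (F.fabs (x a)) := by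
    intro a
    have t1 : 1/2 < F.μ (F.fabs l) (F.fabs (x a) + F.fabs (x a - l)) := by
      have := F.fabs_triangle (x a) (l - x a)
      rw [show x a + (l - x a) = l by abel] at this
      have h2 : 1/2 < F.μ (F.fabs (x a) + F.fabs (l - x a))
          (F.fabs (x a) + F.fabs (x a - l)) := by
        rw [show l - x a = -(x a - l) by abel, F.fabs_neg]
        exact F.lle_refl _
      exact F.lle_trans this h2
    have t2 : 1/2 < F.μ (F.fabs l) (F.fabs (x a) + y a) :=
      F.lle_trans t1 (F.lle_add_le_add (F.lle_refl _) (hdom a))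
    have t3 := F.lle_add (-y a) t2
    rw [show F.fabs (x a) + y a + -y a = F.fabs (x a) by abel,
      show F.fabs l + -y a = F.fabs l - y a by abel] at t3
    exact t3
  have hble : ∀ a, 1/2 < F.μ (b a) (F.fabs (x a)) := fun a =>
    F.sup_le _ _ _ (key a) (F.fabs_nonneg (x a))
  have hbpos : ∀ a, 1/2 < F.μ 0 (b a) := fun a => F.le_sup_right _ _
  have hbmem : ∀ a, b a ∈ S := by
    intro a
    apply hS (b a) (x a) _ (hmem a)
    apply F.fabs_le (hble a)
    exact F.lle_trans (F.lle_neg (hbpos a)) (by rw [neg_zero]; exact F.fabs_nonneg (x a))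
  have hbinc : F.Increasing b := by
    intro a c hac
    have h1 := F.lle_neg (hdec a c hac)
    have h2 := F.lle_add (F.fabs l) h1
    rw [show -y a + F.fabs l = F.fabs l - y a by abel,
      show -y c + F.fabs l = F.fabs l - y c by abel] at h2
    exact F.sup_le _ _ _ (F.lle_trans h2 (F.le_sup_left _ _)) (F.le_sup_right _ _)
  have hbsup : F.IsSup (Set.range b) (F.fabs l) := by
    constructor
    · rintro z ⟨a, rfl⟩
      apply F.sup_le
      · have h1 := F.lle_neg (hy0 a)
        have h2 := F.lle_add (F.fabs l) h1
        rw [neg_zero, show -y a + F.fabs l = F.fabs l - y a by abel,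
          show (0:X) + F.fabs l = F.fabs l by abel] at h2
        exact h2
      · exact F.fabs_nonneg l
    · intro u hu
      have hlb : F.LowerBound (Set.range y) (F.fabs l - u) := by
        rintro z ⟨a, rfl⟩
        have h1 : 1/2 < F.μ (F.fabs l - y a) u :=
          F.lle_trans (F.le_sup_left (F.fabs l - y a) 0) (hu (b a) ⟨a, rfl⟩)
        have h2 := F.lle_add (y a - u) h1
        rw [show F.fabs l - y a + (y a - u) = F.fabs l - u by abel,
          show u + (y a - u) = y a by abel] at h2
        exact h2
      have h := hinf.2 (F.fabs l - u) hlb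
      have h2 := F.lle_add u h
      rw [show F.fabs l - u + u = F.fabs l by abel, zero_add] at h2
      exact h2
  have hfabsl : F.fabs l ∈ S := H b (F.fabs l) (fun a => ⟨hbmem a, hbpos a⟩) hbinc hbsup
  exact hS l (F.fabs l) (F.le_sup_left _ _) hfabsl

end FuzzyRiesz

/-- for a fuzzy solid set `S`, (i) `S` is fuzzy σ-order closed iff
every increasing sequence of positive elements of `S` with supremum `l` has `l ∈ S`;
(ii) `S` is fuzzy order closed iff the same holds for increasing nets. -/
theorem solid_orderClosed_iff {X : Type*} [AddCommGroup X] [Module ℝ X]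
    (F : FuzzyRiesz X) (S : Set X) (hS : F.Solid S) :
    (F.SigmaOrderClosed S ↔
      ∀ (x : ℕ → X) (l : X), (∀ n, x n ∈ S ∧ F.Pos (x n)) → F.Increasing x →
        F.IsSup (Set.range x) l → l ∈ S) ∧
    (FuzzyRiesz.OrderClosed.{u} F S ↔
      ∀ (ι : Type u) [Preorder ι] [Nonempty ι] [IsDirected ι (· ≤ ·)] (x : ι → X) (l : X),
        (∀ a, x a ∈ S ∧ F.Pos (x a)) → F.Increasing x → F.IsSup (Set.range x) l → l ∈ S) := by
  constructor
  · constructor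
    · intro H x l hpos hinc hsup
      exact H x l (fun n => (hpos n).1) (F.conv_of_sup x l hinc hsup)
    · intro H x l hmem hconv
      exact F.mem_of_conv hS x l hmem hconv fun b m h1 h2 h3 => H b m (fun a => h1 a) h2 h3
  · constructor
    · intro H ι _ _ _ x l hpos hinc hsup
      exact H ι x l (fun a => (hpos a).1) (F.conv_of_sup x l hinc hsup)
    · intro H ι _ _ _ x l hmem hconv
      exact F.mem_of_conv hS x l hmem hconv fun b m h1 h2 h3 => H ι b m (fun a => h1 a) h2 h3
end

section
/- Let X be a fuzzy Riesz space and I₁, I₂ fuzzy ideals of X. Then: (i) the algebraic sum I₁ + I₂ = {x₁+x₂ : x₁∈I₁, x₂∈I₂} is a fuzzy ideal of X; (ii) I₁⁺ + I₂⁺ = (I₁+I₂)⁺, where S⁺ = {x∈S : μ(0,x)>1/2}; (iii) if I₁ ∩ I₂ = {0} and x = x₁+x₂, y = y₁+y₂ with x₁,y₁ ∈ I₁ and x₂,y₂ ∈ I₂, then μ(x,y)>1/2 implies μ(x₁,y₁)>1/2 and μ(x₂,y₂)>1/2. -/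
namespace FRSum

variable {X : Type*} [AddCommGroup X] [Module ℝ X]

/-- Type synonym of `X` carrying the lattice order induced by `F`. -/
def Syn (_F : FuzzyRiesz X) : Type _ := X

variable (F : FuzzyRiesz X)

/-- Identity map into the synonym. -/
def toSyn : X → Syn F := id

/-- Identity map out of the synonym. -/
def ofSyn : Syn F → X := id

instance : AddCommGroup (Syn F) := inferInstanceAs (AddCommGroup X)

instance : Lattice (Syn F) where
  le a b := 1/2 < F.μ (ofSyn F a) (ofSyn F b)
  le_refl a := by show (1:ℝ)/2 < F.μ _ _; rw [F.refl]; norm_num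
  le_trans a b c h1 h2 := lt_of_lt_of_le (lt_min h1 h2) (F.trans _ _ _)
  le_antisymm a b h1 h2 := F.antisymm a b (by
    change (1:ℝ)/2 < F.μ a b at h1
    change (1:ℝ)/2 < F.μ b a at h2
    linarith)
  sup := F.sup
  le_sup_left := F.le_sup_left
  le_sup_right := F.le_sup_right
  sup_le a b c h1 h2 := F.sup_le a b c h1 h2
  inf := F.inf
  inf_le_left := F.inf_le_left
  inf_le_right := F.inf_le_right
  le_inf a b c h1 h2 := F.le_inf b c a h1 h2

lemma le_def {a b : Syn F} : a ≤ b ↔ 1/2 < F.μ (ofSyn F a) (ofSyn F b) := Iff.rfl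

lemma toSyn_add (a b : X) : toSyn F (a + b) = toSyn F a + toSyn F b := rfl

lemma toSyn_zero : toSyn F (0 : X) = 0 := rfl

instance : AddLeftMono (Syn F) :=
  ⟨fun c a b h => by
    change (1:ℝ)/2 < F.μ a b at h
    have h2 := F.add_compat a b c h
    show (1:ℝ)/2 < F.μ (c + a) (c + b)
    rw [add_comm c a, add_comm c b]
    exact lt_of_lt_of_le h h2⟩

instance : AddRightMono (Syn F) :=
  ⟨fun c a b h => by
    change (1:ℝ)/2 < F.μ a b at h
    exact lt_of_lt_of_le h (F.add_compat a b c h)⟩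

lemma fabs_eq (x : Syn F) : toSyn F (F.fabs (ofSyn F x)) = |x| := rfl

lemma abs_def (z : Syn F) : |z| = z ⊔ -z := rfl

lemma neg_abs_le' (z : Syn F) : -|z| ≤ z := by
  rw [abs_def, neg_sup, neg_neg]
  exact inf_le_right

/-- Riesz decomposition. -/
lemma decomp (a b x : Syn F) (ha : 0 ≤ a) (hb : 0 ≤ b) (hx : |x| ≤ a + b) :
    ∃ u v : Syn F, x = u + v ∧ |u| ≤ a ∧ |v| ≤ b := by
  have hxab : -(a + b) ≤ x := (neg_le_neg_iff.2 hx).trans (neg_abs_le' F x)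
  refine ⟨(x ⊔ -a) ⊓ a, x - (x ⊔ -a) ⊓ a, by abel, ?_, ?_⟩
  · refine abs_le'.2 ⟨inf_le_right, ?_⟩
    rw [neg_le]
    exact le_inf le_sup_right ((neg_nonpos.2 ha).trans ha)
  · have hv : x - (x ⊔ -a) ⊓ a = (0 ⊓ (x + a)) ⊔ (x - a) := by
      rw [sub_eq_add_neg, neg_inf, neg_sup, neg_neg, add_sup, add_inf]
      rw [add_neg_cancel, ← sub_eq_add_neg]
    rw [hv]
    refine abs_le'.2 ⟨sup_le (inf_le_left.trans hb) ?_, ?_⟩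
    · rw [sub_le_iff_le_add, add_comm]
      exact (le_abs_self x).trans hx
    · rw [neg_le]
      refine le_trans (le_inf (neg_nonpos.2 hb) ?_) le_sup_left
      rw [← sub_le_iff_le_add]
      calc -b - a = -(a + b) := by abel
        _ ≤ x := hxab

/-- Positive Riesz decomposition. -/
lemma decomp_pos (a b x : Syn F) (ha : 0 ≤ a) (hb : 0 ≤ b) (hx0 : 0 ≤ x)
    (hx : x ≤ a + b) :
    ∃ u v : Syn F, x = u + v ∧ 0 ≤ u ∧ u ≤ a ∧ 0 ≤ v ∧ v ≤ b := by
  refine ⟨x ⊓ a, x - x ⊓ a, by abel, le_inf hx0 ha, inf_le_right,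
    sub_nonneg.2 inf_le_left, ?_⟩
  have hv : x - x ⊓ a = 0 ⊔ (x - a) := by
    rw [sub_eq_add_neg, neg_inf, add_sup, add_neg_cancel, ← sub_eq_add_neg]
  rw [hv]
  refine sup_le hb ?_
  rw [sub_le_iff_le_add, add_comm]
  exact hx

lemma neg_mem_of_mem {I : Set X} (h : F.IsIdeal I) {x : X} (hx : x ∈ I) : -x ∈ I := by
  have := h.smul_mem (-1 : ℝ) hx
  rwa [neg_one_smul] at this

lemma sub_mem_of_mem {I : Set X} (h : F.IsIdeal I) {x y : X} (hx : x ∈ I) (hy : y ∈ I) :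
    x - y ∈ I := by
  have := h.add_mem hx (neg_mem_of_mem F h hy)
  rwa [← sub_eq_add_neg] at this

/-- Membership from domination: if `|u| ≤ |y|` (in the synonym order) and `y ∈ I`. -/
lemma solid_mem {I : Set X} (h : F.IsIdeal I) {u y : Syn F} (hu : |u| ≤ |y|)
    (hy : ofSyn F y ∈ I) : ofSyn F u ∈ I :=
  h.solid (ofSyn F u) (ofSyn F y) hu hy

end FRSum

/-- for fuzzy ideals `I₁, I₂`: (i) `I₁ + I₂` is a fuzzy ideal;
(ii) `I₁⁺ + I₂⁺ = (I₁ + I₂)⁺`; (iii) if `I₁ ∩ I₂ = {0}` then the decomposition of the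
fuzzy order relation holds componentwise. -/
theorem sum_ideal_spec {X : Type*} [AddCommGroup X] [Module ℝ X]
    (F : FuzzyRiesz X) (I₁ I₂ : Set X) (h₁ : F.IsIdeal I₁) (h₂ : F.IsIdeal I₂) :
    F.IsIdeal (FuzzyRiesz.sumSet I₁ I₂) ∧
    FuzzyRiesz.sumSet (F.posPart I₁) (F.posPart I₂) = F.posPart (FuzzyRiesz.sumSet I₁ I₂) ∧
    (I₁ ∩ I₂ = {0} → ∀ x₁ y₁ x₂ y₂ : X, x₁ ∈ I₁ → y₁ ∈ I₁ → x₂ ∈ I₂ → y₂ ∈ I₂ →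
      1/2 < F.μ (x₁ + x₂) (y₁ + y₂) → 1/2 < F.μ x₁ y₁ ∧ 1/2 < F.μ x₂ y₂) := by
  classical
  constructor
  · -- (i) the sum is a fuzzy ideal
    refine ⟨⟨0, h₁.zero_mem, 0, h₂.zero_mem, by simp⟩, ?_, ?_, ?_⟩
    · rintro x y ⟨a, ha, b, hb, rfl⟩ ⟨c, hc, d, hd, rfl⟩
      exact ⟨a + c, h₁.add_mem ha hc, b + d, h₂.add_mem hb hd, by abel⟩
    · rintro c x ⟨a, ha, b, hb, rfl⟩
      exact ⟨c • a, h₁.smul_mem c ha, c • b, h₂.smul_mem c hb, by rw [smul_add]⟩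
    · rintro x y hxy ⟨a, ha, b, hb, rfl⟩
      have hxy' : |FRSum.toSyn F x| ≤ |FRSum.toSyn F (a + b)| := hxy
      have habs : |FRSum.toSyn F x| ≤ |FRSum.toSyn F a| + |FRSum.toSyn F b| :=
        hxy'.trans (abs_add_le (FRSum.toSyn F a) (FRSum.toSyn F b))
      obtain ⟨u, v, huv, hu, hv⟩ := FRSum.decomp F |FRSum.toSyn F a| |FRSum.toSyn F b|
        (FRSum.toSyn F x) (abs_nonneg _) (abs_nonneg _) habs
      exact ⟨FRSum.ofSyn F u, FRSum.solid_mem F h₁ hu ha,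
             FRSum.ofSyn F v, FRSum.solid_mem F h₂ hv hb, huv⟩
  constructor
  · -- (ii) positive parts
    ext x
    constructor
    · rintro ⟨a, ⟨ha, hpa⟩, b, ⟨hb, hpb⟩, rfl⟩
      refine ⟨⟨a, ha, b, hb, rfl⟩, ?_⟩
      have hpa' : (0 : FRSum.Syn F) ≤ FRSum.toSyn F a := hpa
      have hpb' : (0 : FRSum.Syn F) ≤ FRSum.toSyn F b := hpb
      have hsum : (0 : FRSum.Syn F) ≤ FRSum.toSyn F a + FRSum.toSyn F b := by
        have := add_le_add hpa' hpb'
        simpa using this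
      exact hsum
    · rintro ⟨⟨a, ha, b, hb, rfl⟩, hpos⟩
      have hpos' : (0 : FRSum.Syn F) ≤ FRSum.toSyn F a + FRSum.toSyn F b := hpos
      have hab : FRSum.toSyn F a + FRSum.toSyn F b ≤
          |FRSum.toSyn F a| + |FRSum.toSyn F b| :=
        add_le_add (le_abs_self _) (le_abs_self _)
      obtain ⟨u, v, huv, hu0, hua, hv0, hvb⟩ := FRSum.decomp_pos F
        |FRSum.toSyn F a| |FRSum.toSyn F b| (FRSum.toSyn F a + FRSum.toSyn F b)
        (abs_nonneg _) (abs_nonneg _) hpos' hab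
      have huabs : |u| ≤ |FRSum.toSyn F a| := by
        rw [abs_of_nonneg hu0]; exact hua
      have hvabs : |v| ≤ |FRSum.toSyn F b| := by
        rw [abs_of_nonneg hv0]; exact hvb
      exact ⟨FRSum.ofSyn F u, ⟨FRSum.solid_mem F h₁ huabs ha, hu0⟩,
             FRSum.ofSyn F v, ⟨FRSum.solid_mem F h₂ hvabs hb, hv0⟩, huv⟩
  · -- (iii) componentwise decomposition of the order
    intro hI x₁ y₁ x₂ y₂ hx₁ hy₁ hx₂ hy₂ hμ
    have hle : FRSum.toSyn F x₁ + FRSum.toSyn F x₂ ≤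
        FRSum.toSyn F y₁ + FRSum.toSyn F y₂ := hμ
    have key : ∀ (J K : Set X), F.IsIdeal J → F.IsIdeal K → J ∩ K = {0} →
        ∀ a b c d : X, a ∈ J → b ∈ J → c ∈ K → d ∈ K →
        FRSum.toSyn F a + FRSum.toSyn F c ≤ FRSum.toSyn F b + FRSum.toSyn F d →
        FRSum.toSyn F a ≤ FRSum.toSyn F b := by
      intro J K hJ hK hJK a b c d haI hbI hcI hdI h
      set w : FRSum.Syn F := (FRSum.toSyn F a - FRSum.toSyn F b) ⊔ 0 with hw
      have hw0 : (0 : FRSum.Syn F) ≤ w := le_sup_right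
      have hsub : FRSum.toSyn F a - FRSum.toSyn F b ≤
          FRSum.toSyn F d - FRSum.toSyn F c := by
        rw [sub_le_sub_iff]
        calc FRSum.toSyn F a + FRSum.toSyn F c ≤ FRSum.toSyn F b + FRSum.toSyn F d := h
          _ = FRSum.toSyn F d + FRSum.toSyn F b := by abel
      have hwabs : |w| = w := abs_of_nonneg hw0
      have hwI₁ : FRSum.ofSyn F w ∈ J := by
        refine FRSum.solid_mem F hJ (y := FRSum.toSyn F (a - b)) ?_
          (FRSum.sub_mem_of_mem F hJ haI hbI)
        rw [hwabs]
        exact sup_le (le_abs_self _) (abs_nonneg _)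
      have hwI₂ : FRSum.ofSyn F w ∈ K := by
        refine FRSum.solid_mem F hK (y := FRSum.toSyn F (d - c)) ?_
          (FRSum.sub_mem_of_mem F hK hdI hcI)
        rw [hwabs]
        exact sup_le (hsub.trans (le_abs_self _)) (abs_nonneg _)
      have hw_zero : FRSum.ofSyn F w = 0 := by
        have hmem : FRSum.ofSyn F w ∈ J ∩ K := ⟨hwI₁, hwI₂⟩
        rw [hJK] at hmem
        exact hmem
      have hw_zero' : w = 0 := hw_zero
      have hab0 : FRSum.toSyn F a - FRSum.toSyn F b ≤ 0 := by
        calc FRSum.toSyn F a - FRSum.toSyn F b ≤ w := le_sup_left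
          _ = 0 := hw_zero'
      exact sub_nonpos.1 hab0
    have h1 : FRSum.toSyn F x₁ ≤ FRSum.toSyn F y₁ :=
      key I₁ I₂ h₁ h₂ hI x₁ y₁ x₂ y₂ hx₁ hy₁ hx₂ hy₂ hle
    have h2 : FRSum.toSyn F x₂ ≤ FRSum.toSyn F y₂ := by
      refine key I₂ I₁ h₂ h₁ (by rw [Set.inter_comm]; exact hI) x₂ y₂ x₁ y₁ hx₂ hy₂ hx₁ hy₁ ?_
      calc FRSum.toSyn F x₂ + FRSum.toSyn F x₁
          = FRSum.toSyn F x₁ + FRSum.toSyn F x₂ := by abel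
        _ ≤ FRSum.toSyn F y₁ + FRSum.toSyn F y₂ := hle
        _ = FRSum.toSyn F y₂ + FRSum.toSyn F y₁ := by abel
    exact ⟨h1, h2⟩
end

section
/- Let A be a subset of a fuzzy Riesz space X. Then: (i) A ⊆ A^{dd}; (ii) A^d = A^{ddd}; (iii) A^d ∩ A^{dd} = {0}; (iv) if A^d = {0}, then A^{dd} = X; (v) A^d is a fuzzy ideal of X; (vi) if A is a fuzzy ideal of X, then for every nonzero x ∈ A^{dd} there exists a nonzero y ∈ A with μ(|y|,|x|) > 1/2. -/
namespace FRH

variable {X : Type*} [AddCommGroup X] [Module ℝ X] (F : FuzzyRiesz X)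

lemma lrefl (x : X) : 1/2 < F.μ x x := by rw [F.refl]; norm_num

variable {F}

lemma ltrans {x y z : X} (h1 : 1/2 < F.μ x y) (h2 : 1/2 < F.μ y z) : 1/2 < F.μ x z :=
  lt_of_lt_of_le (lt_min h1 h2) (F.trans x y z)

lemma lantisymm {x y : X} (h1 : 1/2 < F.μ x y) (h2 : 1/2 < F.μ y x) : x = y :=
  F.antisymm x y (by linarith)

lemma add_right {x y : X} (z : X) (h : 1/2 < F.μ x y) : 1/2 < F.μ (x + z) (y + z) :=
  lt_of_lt_of_le h (F.add_compat x y z h)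

lemma smul_le {x y : X} {c : ℝ} (hc : 0 ≤ c) (h : 1/2 < F.μ x y) :
    1/2 < F.μ (c • x) (c • y) :=
  lt_of_lt_of_le h (F.smul_compat x y c hc h)

lemma add_mono {a b c d : X} (h1 : 1/2 < F.μ a b) (h2 : 1/2 < F.μ c d) :
    1/2 < F.μ (a + c) (b + d) := by
  have t1 := add_right c h1
  have t2 := add_right b h2
  rw [add_comm c b, add_comm d b] at t2
  exact ltrans t1 t2

lemma neg_mono {a b : X} (h : 1/2 < F.μ a b) : 1/2 < F.μ (-b) (-a) := by
  have := add_right (-a - b) h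
  rw [show a + (-a - b) = -b by abel, show b + (-a - b) = -a by abel] at this
  exact this

lemma inf_mono_left {a b : X} (c : X) (h : 1/2 < F.μ a b) :
    1/2 < F.μ (F.inf a c) (F.inf b c) :=
  F.le_inf _ _ _ (ltrans (F.inf_le_left a c) h) (F.inf_le_right a c)

lemma inf_comm' (a b : X) : F.inf a b = F.inf b a :=
  lantisymm (F.le_inf _ _ _ (F.inf_le_right a b) (F.inf_le_left a b))
    (F.le_inf _ _ _ (F.inf_le_right b a) (F.inf_le_left b a))

lemma inf_of_le {a b : X} (h : 1/2 < F.μ a b) : F.inf a b = a :=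
  lantisymm (F.inf_le_left a b) (F.le_inf _ _ _ (lrefl F a) h)

lemma inf_nonneg {a b : X} (ha : 1/2 < F.μ 0 a) (hb : 1/2 < F.μ 0 b) :
    1/2 < F.μ 0 (F.inf a b) := F.le_inf _ _ _ ha hb

lemma abs_nonneg' (x : X) : 1/2 < F.μ 0 (F.fabs x) := by
  have h1 : 1/2 < F.μ 0 (F.fabs x + F.fabs x) := by
    have := add_mono (F.le_sup_left x (-x)) (F.le_sup_right x (-x))
    rw [show x + -x = (0 : X) by abel] at this
    exact this
  have h2 := smul_le (by norm_num : (0:ℝ) ≤ 1/2) h1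
  rw [smul_zero, smul_add, show (1/2 : ℝ) • F.fabs x + (1/2 : ℝ) • F.fabs x
      = ((1/2 : ℝ) + (1/2 : ℝ)) • F.fabs x by rw [add_smul]] at h2
  norm_num at h2
  exact h2

lemma abs_le {a b : X} (h1 : 1/2 < F.μ a b) (h2 : 1/2 < F.μ (-a) b) :
    1/2 < F.μ (F.fabs a) b := F.sup_le _ _ _ h1 h2

lemma abs_of_nonneg {w : X} (h : 1/2 < F.μ 0 w) : F.fabs w = w := by
  refine lantisymm (abs_le (lrefl F w) ?_) (F.le_sup_left w (-w))
  have := neg_mono h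
  rw [neg_zero] at this
  exact ltrans this h

lemma abs_zero : F.fabs (0 : X) = 0 := abs_of_nonneg (lrefl F 0)

lemma eq_zero_of_abs {x : X} (h : F.fabs x = 0) : x = 0 := by
  have h1 : 1/2 < F.μ x 0 := h ▸ F.le_sup_left x (-x)
  have h2 : 1/2 < F.μ (-x) 0 := h ▸ F.le_sup_right x (-x)
  have h3 := neg_mono h2
  rw [neg_zero, neg_neg] at h3
  exact lantisymm h1 h3

lemma add_inf (a b c : X) : a + F.inf b c = F.inf (a + b) (a + c) := by
  refine lantisymm (F.le_inf _ _ _ ?_ ?_) ?_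
  · have := add_right a (F.inf_le_left b c)
    rw [add_comm _ a, add_comm b a] at this; exact this
  · have := add_right a (F.inf_le_right b c)
    rw [add_comm _ a, add_comm c a] at this; exact this
  · have h1 := add_right (-a) (F.inf_le_left (a+b) (a+c))
    rw [show a + b + -a = b by abel] at h1
    have h2 := add_right (-a) (F.inf_le_right (a+b) (a+c))
    rw [show a + c + -a = c by abel] at h2
    have h3 := add_right a (F.le_inf _ _ _ h1 h2)
    rw [show F.inf (a+b) (a+c) + -a + a = F.inf (a+b) (a+c) by abel,
      add_comm _ a] at h3
    exact h3

lemma inf_add_le {u v w : X} (hu : 1/2 < F.μ 0 u) (hv : 1/2 < F.μ 0 v)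
    (hw : 1/2 < F.μ 0 w) :
    1/2 < F.μ (F.inf (u + v) w) (F.inf u w + F.inf v w) := by
  have huw : 1/2 < F.μ 0 (F.inf u w) := inf_nonneg hu hw
  have c1 : 1/2 < F.μ (F.inf (u + v) w) (F.inf u w + v) := by
    rw [add_comm (F.inf u w) v, add_inf v u w]
    refine F.le_inf _ _ _ ?_ ?_
    · rw [add_comm v u]; exact F.inf_le_left _ _
    · refine ltrans (F.inf_le_right _ _) ?_
      have := add_right w hv; rw [zero_add] at this; exact this
  have c2 : 1/2 < F.μ (F.inf (u + v) w) (F.inf u w + w) := by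
    refine ltrans (F.inf_le_right _ _) ?_
    have := add_right w huw
    rw [zero_add, add_comm (F.inf u w) w] at this
    rw [add_comm (F.inf u w) w]
    exact this
  rw [add_inf (F.inf u w) v w]
  exact F.le_inf _ _ _ c1 c2

/-- If `0 ≤ a ≤ b`, `0 ≤ c` and `b ⊓ c = 0` then `a ⊓ c = 0`. -/
lemma disj_of_le {a b c : X} (h : 1/2 < F.μ a b) (ha : 1/2 < F.μ 0 a)
    (hc : 1/2 < F.μ 0 c) (hb : F.inf b c = 0) : F.inf a c = 0 := by
  have h1 := inf_mono_left c h
  rw [hb] at h1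
  exact lantisymm h1 (inf_nonneg ha hc)

lemma disj_add_raw {a b c : X} (ha : 1/2 < F.μ 0 a) (hb : 1/2 < F.μ 0 b)
    (hc : 1/2 < F.μ 0 c) (h1 : F.inf a c = 0) (h2 : F.inf b c = 0) :
    F.inf (a + b) c = 0 := by
  have key := inf_add_le ha hb hc (w := c)
  rw [h1, h2, add_zero] at key
  have hab : 1/2 < F.μ 0 (a + b) := by
    have := add_mono ha hb; rw [add_zero] at this; exact this
  exact lantisymm key (inf_nonneg hab hc)

lemma abs_add' (x y : X) : 1/2 < F.μ (F.fabs (x + y)) (F.fabs x + F.fabs y) := by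
  refine abs_le (add_mono (F.le_sup_left x (-x)) (F.le_sup_left y (-y))) ?_
  rw [neg_add]
  exact add_mono (F.le_sup_right x (-x)) (F.le_sup_right y (-y))

lemma disj_add {x y z : X} (h1 : F.inf (F.fabs x) (F.fabs z) = 0)
    (h2 : F.inf (F.fabs y) (F.fabs z) = 0) :
    F.inf (F.fabs (x + y)) (F.fabs z) = 0 :=
  disj_of_le (abs_add' x y) (abs_nonneg' _) (abs_nonneg' _)
    (disj_add_raw (abs_nonneg' _) (abs_nonneg' _) (abs_nonneg' _) h1 h2)

lemma smul_mono_scalar {a : X} {c₁ c₂ : ℝ} (h : c₁ ≤ c₂) (ha : 1/2 < F.μ 0 a) :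
    1/2 < F.μ (c₁ • a) (c₂ • a) := by
  have h0 := smul_le (sub_nonneg.2 h) ha
  rw [smul_zero] at h0
  have := add_right (c₁ • a) h0
  rw [zero_add, ← add_smul, sub_add_cancel] at this
  exact this

lemma smul_le_abs (d : ℝ) (x : X) : 1/2 < F.μ (d • x) (|d| • F.fabs x) := by
  rcases le_or_gt 0 d with hd | hd
  · rw [_root_.abs_of_nonneg hd]
    exact smul_le hd (F.le_sup_left x (-x))
  · rw [_root_.abs_of_neg hd, show d • x = (-d) • (-x) by rw [neg_smul, smul_neg, neg_neg]]
    exact smul_le (by linarith) (F.le_sup_right x (-x))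

lemma abs_smul_le (c : ℝ) (x : X) : 1/2 < F.μ (F.fabs (c • x)) (|c| • F.fabs x) := by
  refine abs_le (smul_le_abs c x) ?_
  have := smul_le_abs (F := F) (-c) x
  rw [neg_smul, abs_neg] at this
  exact this

lemma disj_nsmul {a c : X} (ha : 1/2 < F.μ 0 a) (hc : 1/2 < F.μ 0 c)
    (h : F.inf a c = 0) (n : ℕ) : F.inf ((n : ℝ) • a) c = 0 := by
  induction n with
  | zero => simpa [inf_comm' (0 : X) c] using inf_of_le hc
  | succ n ih =>
    have key : ((n + 1 : ℕ) : ℝ) • a = (n : ℝ) • a + a := by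
      push_cast; rw [add_smul, one_smul]
    rw [key]
    have hna : 1/2 < F.μ 0 ((n : ℝ) • a) := by
      have := smul_le (by positivity : (0:ℝ) ≤ (n : ℝ)) ha
      rw [smul_zero] at this; exact this
    exact disj_add_raw hna ha hc ih h

end FRH


/-- properties of the disjoint complement of a subset `A`. -/
theorem dcomp_spec {X : Type*} [AddCommGroup X] [Module ℝ X]
    (F : FuzzyRiesz X) (A : Set X) :
    A ⊆ F.dcomp (F.dcomp A) ∧
    F.dcomp A = F.dcomp (F.dcomp (F.dcomp A)) ∧
    F.dcomp A ∩ F.dcomp (F.dcomp A) = {0} ∧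
    (F.dcomp A = {0} → F.dcomp (F.dcomp A) = Set.univ) ∧
    F.IsIdeal (F.dcomp A) ∧
    (F.IsIdeal A → ∀ x ∈ F.dcomp (F.dcomp A), x ≠ 0 →
      ∃ y ∈ A, y ≠ 0 ∧ 1/2 < F.μ (F.fabs y) (F.fabs x)) := by
  classical
  have hdd : ∀ B : Set X, B ⊆ F.dcomp (F.dcomp B) := by
    intro B x hx y hy
    rw [FRH.inf_comm']
    exact hy x hx
  have hanti : ∀ B C : Set X, B ⊆ C → F.dcomp C ⊆ F.dcomp B := by
    intro B C h x hx y hy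
    exact hx y (h hy)
  have hzero : ∀ B : Set X, (0 : X) ∈ F.dcomp B := by
    intro B y hy
    show F.inf (F.fabs 0) (F.fabs y) = 0
    rw [FRH.abs_zero]
    exact FRH.inf_of_le (FRH.abs_nonneg' y)
  refine ⟨hdd A, ?_, ?_, ?_, ?_, ?_⟩
  · exact Set.Subset.antisymm (hdd _) (hanti _ _ (hdd A))
  · ext x
    simp only [Set.mem_inter_iff, Set.mem_singleton_iff]
    constructor
    · rintro ⟨h1, h2⟩
      have h3 := h2 x h1
      rw [FRH.inf_of_le (FRH.lrefl F _)] at h3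
      exact FRH.eq_zero_of_abs h3
    · rintro rfl
      exact ⟨hzero A, hzero _⟩
  · intro h
    apply Set.eq_univ_of_forall
    intro x y hy
    rw [h, Set.mem_singleton_iff] at hy
    subst hy
    rw [FRH.abs_zero, FRH.inf_comm']
    exact FRH.inf_of_le (FRH.abs_nonneg' x)
  · refine ⟨hzero A, ?_, ?_, ?_⟩
    · intro x y hx hy z hz
      exact FRH.disj_add (hx z hz) (hy z hz)
    · intro c x hx z hz
      have h1 := FRH.abs_smul_le (F := F) c x
      have h2 := FRH.smul_mono_scalar (F := F) (Nat.le_ceil |c|) (FRH.abs_nonneg' x)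
      have h3 := FRH.disj_nsmul (FRH.abs_nonneg' x) (FRH.abs_nonneg' z) (hx z hz) ⌈|c|⌉₊
      exact FRH.disj_of_le (FRH.ltrans h1 h2) (FRH.abs_nonneg' _) (FRH.abs_nonneg' _) h3
    · intro x y h hy z hz
      exact FRH.disj_of_le h (FRH.abs_nonneg' _) (FRH.abs_nonneg' _) (hy z hz)
  · intro hA x hx hxne
    have hxd : x ∉ F.dcomp A := by
      intro hxA
      have h3 := hx x hxA
      rw [FRH.inf_of_le (FRH.lrefl F _)] at h3
      exact hxne (FRH.eq_zero_of_abs h3)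
    simp only [FuzzyRiesz.dcomp, Set.mem_setOf_eq] at hxd
    push_neg at hxd
    obtain ⟨z, hz, hne⟩ := hxd
    have hwpos : 1/2 < F.μ 0 (F.inf (F.fabs x) (F.fabs z)) :=
      FRH.inf_nonneg (FRH.abs_nonneg' x) (FRH.abs_nonneg' z)
    have hwabs : F.fabs (F.inf (F.fabs x) (F.fabs z)) = F.inf (F.fabs x) (F.fabs z) :=
      FRH.abs_of_nonneg hwpos
    refine ⟨F.inf (F.fabs x) (F.fabs z), ?_, hne, ?_⟩
    · exact hA.solid _ z (by rw [hwabs]; exact F.inf_le_right _ _) hz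
    · rw [hwabs]
      exact F.inf_le_left _ _
end

section
/- Let I be a fuzzy ideal of a fuzzy Riesz space X. Then: (i) I^{dd} is the largest fuzzy ideal J of X with the property that for every nonzero x ∈ J there exists a nonzero y ∈ I such that μ(|y|,|x|) > 1/2; (ii) I^d = {0} if and only if for every nonzero x ∈ X there exists a nonzero y ∈ I such that μ(|y|,|x|) > 1/2. -/
section AuxProof

/-- The lattice structure on `X` induced by the fuzzy order of `F`. -/
def FuzzyRiesz.toLattice {X : Type*} [AddCommGroup X] [Module ℝ X]
    (F : FuzzyRiesz X) : Lattice X where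
  le x y := 1/2 < F.μ x y
  le_refl x := by show (1:ℝ)/2 < F.μ x x; rw [F.refl]; norm_num
  le_trans x y z h1 h2 := lt_of_lt_of_le (lt_min h1 h2) (F.trans x y z)
  le_antisymm x y h1 h2 := F.antisymm x y (by
    have a : (1:ℝ)/2 < F.μ x y := h1
    have b : (1:ℝ)/2 < F.μ y x := h2
    linarith)
  sup := F.sup
  le_sup_left := F.le_sup_left
  le_sup_right := F.le_sup_right
  sup_le := F.sup_le
  inf := F.inf
  inf_le_left := F.inf_le_left
  inf_le_right := F.inf_le_right
  le_inf a b c h1 h2 := F.le_inf b c a h1 h2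

namespace FuzzyAux

variable {Y : Type*} [AddCommGroup Y] [Module ℝ Y] [Lattice Y]
  [CovariantClass Y Y (· + ·) (· ≤ ·)] [CovariantClass Y Y (Function.swap (· + ·)) (· ≤ ·)]

theorem abs_add' (a b : Y) : |a + b| ≤ |a| + |b| := by
  apply sup_le
  · exact add_le_add (le_abs_self a) (le_abs_self b)
  · rw [neg_add]
    exact add_le_add (neg_le_abs a) (neg_le_abs b)

theorem abs_zero_iff {a : Y} (h : |a| = 0) : a = 0 := by
  have h1 : a ≤ 0 := (le_abs_self a).trans h.le
  have h2 : -a ≤ 0 := (neg_le_abs a).trans h.le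
  exact le_antisymm h1 (by simpa using h2)

section Smul
variable (hsm : ∀ (t : ℝ), 0 ≤ t → ∀ a b : Y, a ≤ b → t • a ≤ t • b)
include hsm

theorem smul_nonneg' {t : ℝ} (ht : 0 ≤ t) {a : Y} (ha : 0 ≤ a) : 0 ≤ t • a := by
  simpa using hsm t ht 0 a ha

theorem smul_le_self {t : ℝ} (ht : 0 ≤ t) (ht1 : t ≤ 1) {a : Y} (ha : 0 ≤ a) :
    t • a ≤ a := by
  have : 0 ≤ a - t • a := by
    have := smul_nonneg' hsm (t := 1 - t) (by linarith) ha
    rwa [sub_smul, one_smul] at this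
  exact sub_nonneg.mp this

theorem le_smul_self {t : ℝ} (ht : 1 ≤ t) {a : Y} (ha : 0 ≤ a) : a ≤ t • a := by
  have : 0 ≤ t • a - a := by
    have := smul_nonneg' hsm (t := t - 1) (by linarith) ha
    rwa [sub_smul, one_smul] at this
  exact sub_nonneg.mp this

theorem smul_sup' (t : ℝ) (ht : 0 ≤ t) (a b : Y) : t • (a ⊔ b) = t • a ⊔ t • b := by
  rcases eq_or_lt_of_le ht with rfl | ht'
  · simp
  · apply le_antisymm
    · have h1 : a ≤ t⁻¹ • (t • a ⊔ t • b) := by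
        have := hsm t⁻¹ (by positivity) (t • a) (t • a ⊔ t • b) le_sup_left
        rwa [inv_smul_smul₀ ht'.ne'] at this
      have h2 : b ≤ t⁻¹ • (t • a ⊔ t • b) := by
        have := hsm t⁻¹ (by positivity) (t • b) (t • a ⊔ t • b) le_sup_right
        rwa [inv_smul_smul₀ ht'.ne'] at this
      have := hsm t ht _ _ (sup_le h1 h2)
      rwa [smul_inv_smul₀ ht'.ne'] at this
    · exact sup_le (hsm t ht _ _ le_sup_left) (hsm t ht _ _ le_sup_right)

theorem smul_inf' (t : ℝ) (ht : 0 ≤ t) (a b : Y) : t • (a ⊓ b) = t • a ⊓ t • b := by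
  rcases eq_or_lt_of_le ht with rfl | ht'
  · simp
  · apply le_antisymm
    · exact le_inf (hsm t ht _ _ inf_le_left) (hsm t ht _ _ inf_le_right)
    · have h1 : t⁻¹ • (t • a ⊓ t • b) ≤ a := by
        have := hsm t⁻¹ (by positivity) (t • a ⊓ t • b) (t • a) inf_le_left
        rwa [inv_smul_smul₀ ht'.ne'] at this
      have h2 : t⁻¹ • (t • a ⊓ t • b) ≤ b := by
        have := hsm t⁻¹ (by positivity) (t • a ⊓ t • b) (t • b) inf_le_right
        rwa [inv_smul_smul₀ ht'.ne'] at this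
      have := hsm t ht _ _ (le_inf h1 h2)
      rwa [smul_inv_smul₀ ht'.ne'] at this

theorem abs_smul' (t : ℝ) (a : Y) : |t • a| = |t| • |a| := by
  rcases le_total 0 t with ht | ht
  · have : |t • a| = (t • a) ⊔ -(t • a) := rfl
    rw [this, ← smul_neg, ← smul_sup' hsm t ht, abs_of_nonneg ht]
    rfl
  · have h1 : t • a = (-t) • (-a) := by rw [neg_smul_neg]
    have : |(-t) • (-a)| = ((-t) • (-a)) ⊔ -((-t) • (-a)) := rfl
    rw [h1, this, ← smul_neg, ← smul_sup' hsm (-t) (by linarith), abs_of_nonpos ht]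
    have : (-a) ⊔ (- -a) = |a| := by rw [neg_neg, sup_comm]; rfl
    rw [this]

theorem disj_smul {t : ℝ} (ht : 0 ≤ t) {a b : Y} (ha : 0 ≤ a) (hb : 0 ≤ b)
    (h : a ⊓ b = 0) : (t • a) ⊓ b = 0 := by
  apply le_antisymm _ (le_inf (smul_nonneg' hsm ht ha) hb)
  rcases le_total t 1 with h1 | h1
  · calc (t • a) ⊓ b ≤ a ⊓ b := inf_le_inf_right b (smul_le_self hsm ht h1 ha)
      _ = 0 := h
  · calc (t • a) ⊓ b ≤ (t • a) ⊓ (t • b) :=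
        inf_le_inf_left _ (le_smul_self hsm h1 hb)
      _ = t • (a ⊓ b) := (smul_inf' hsm t ht a b).symm
      _ = 0 := by rw [h, smul_zero]

end Smul

theorem disj_add {a b c : Y} (ha : 0 ≤ a) (hb : 0 ≤ b) (hc : 0 ≤ c)
    (h1 : a ⊓ c = 0) (h2 : b ⊓ c = 0) : (a + b) ⊓ c = 0 := by
  apply le_antisymm _ (le_inf (add_nonneg ha hb) hc)
  have key : (a ⊓ c) + (b ⊓ c) = ((a + b) ⊓ (a + c)) ⊓ ((c + b) ⊓ (c + c)) := by
    rw [inf_add a c (b ⊓ c), add_inf b c a, add_inf b c c]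
  have hle : (a + b) ⊓ c ≤ (a ⊓ c) + (b ⊓ c) := by
    rw [key]
    refine le_inf (le_inf inf_le_left ?_) (le_inf ?_ ?_)
    · exact inf_le_right.trans (le_add_of_nonneg_left ha)
    · exact inf_le_right.trans (le_add_of_nonneg_right hb)
    · exact inf_le_right.trans (le_add_of_nonneg_left hc)
  calc (a + b) ⊓ c ≤ (a ⊓ c) + (b ⊓ c) := hle
    _ = 0 := by rw [h1, h2, add_zero]

end FuzzyAux

end AuxProof

/-- for a fuzzy ideal `I`, (i) `I^{dd}` is the largest fuzzy ideal `J`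
such that every nonzero `x ∈ J` dominates, in absolute value, some nonzero `y ∈ I`;
(ii) `I^d = {0}` iff every nonzero `x ∈ X` dominates some nonzero `y ∈ I`. -/
theorem ddcomp_largest {X : Type*} [AddCommGroup X] [Module ℝ X]
    (F : FuzzyRiesz X) (I : Set X) (hI : F.IsIdeal I) :
    (F.IsIdeal (F.dcomp (F.dcomp I)) ∧
      (∀ x ∈ F.dcomp (F.dcomp I), x ≠ 0 →
        ∃ y ∈ I, y ≠ 0 ∧ 1/2 < F.μ (F.fabs y) (F.fabs x)) ∧
      (∀ J : Set X, F.IsIdeal J →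
        (∀ x ∈ J, x ≠ 0 → ∃ y ∈ I, y ≠ 0 ∧ 1/2 < F.μ (F.fabs y) (F.fabs x)) →
        J ⊆ F.dcomp (F.dcomp I))) ∧
    (F.dcomp I = {0} ↔
      ∀ x : X, x ≠ 0 → ∃ y ∈ I, y ≠ 0 ∧ 1/2 < F.μ (F.fabs y) (F.fabs x)) := by
  letI : Lattice X := F.toLattice
  haveI hcov : CovariantClass X X (· + ·) (· ≤ ·) := by
    constructor
    intro a b c h
    show (1:ℝ)/2 < F.μ (a + b) (a + c)
    rw [add_comm a b, add_comm a c]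
    exact lt_of_lt_of_le h (F.add_compat b c a h)
  haveI hcov2 : CovariantClass X X (Function.swap (· + ·)) (· ≤ ·) := by
    constructor
    intro a b c h
    show (1:ℝ)/2 < F.μ (b + a) (c + a)
    exact lt_of_lt_of_le h (F.add_compat b c a h)
  have hsm : ∀ (t : ℝ), 0 ≤ t → ∀ a b : X, a ≤ b → t • a ≤ t • b := by
    intro t ht a b h
    exact lt_of_lt_of_le h (F.smul_compat a b t ht h)
  have habs : ∀ x : X, F.fabs x = |x| := fun _ => rfl
  have hinf : ∀ a b : X, F.inf a b = a ⊓ b := fun _ _ => rfl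
  have habs0 : ∀ a : X, |a| = 0 → a = 0 := fun a h => FuzzyAux.abs_zero_iff h
  -- dcomp of any set is a fuzzy ideal
  have hdcomp : ∀ A : Set X, F.IsIdeal (F.dcomp A) := by
    intro A
    constructor
    · intro y hy
      show F.inf (F.fabs 0) (F.fabs y) = 0
      rw [hinf, habs, habs, abs_zero]
      exact inf_eq_left.mpr (abs_nonneg y)
    · intro x x' hx hx' y hy
      have h1 : |x| ⊓ |y| = 0 := by rw [← habs, ← habs, ← hinf]; exact hx y hy
      have h2 : |x'| ⊓ |y| = 0 := by rw [← habs, ← habs, ← hinf]; exact hx' y hy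
      show F.inf (F.fabs (x + x')) (F.fabs y) = 0
      rw [hinf, habs, habs]
      refine le_antisymm ?_ (le_inf (abs_nonneg _) (abs_nonneg _))
      calc |x + x'| ⊓ |y| ≤ (|x| + |x'|) ⊓ |y| :=
            inf_le_inf_right _ (FuzzyAux.abs_add' x x')
        _ = 0 := FuzzyAux.disj_add (abs_nonneg _) (abs_nonneg _) (abs_nonneg _) h1 h2
    · intro c x hx y hy
      have h1 : |x| ⊓ |y| = 0 := by rw [← habs, ← habs, ← hinf]; exact hx y hy
      show F.inf (F.fabs (c • x)) (F.fabs y) = 0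
      rw [hinf, habs, habs, FuzzyAux.abs_smul' hsm c x]
      exact FuzzyAux.disj_smul hsm (abs_nonneg c) (abs_nonneg x) (abs_nonneg y) h1
    · intro x z hxz hz y hy
      have h1 : |z| ⊓ |y| = 0 := by rw [← habs, ← habs, ← hinf]; exact hz y hy
      have hxz' : |x| ≤ |z| := by rw [← habs, ← habs]; exact hxz
      show F.inf (F.fabs x) (F.fabs y) = 0
      rw [hinf, habs, habs]
      refine le_antisymm ?_ (le_inf (abs_nonneg _) (abs_nonneg _))
      calc |x| ⊓ |y| ≤ |z| ⊓ |y| := inf_le_inf_right _ hxz'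
        _ = 0 := h1
  -- key extraction lemma
  have hkey : ∀ x : X, x ∉ F.dcomp I →
      ∃ y ∈ I, y ≠ 0 ∧ 1/2 < F.μ (F.fabs y) (F.fabs x) := by
    intro x hx
    simp only [FuzzyRiesz.dcomp, Set.mem_setOf_eq] at hx
    push_neg at hx
    obtain ⟨w, hwI, hne⟩ := hx
    set z := F.inf (F.fabs x) (F.fabs w) with hzdef
    have hz : z = |x| ⊓ |w| := by rw [hzdef, hinf, habs, habs]
    have hz0 : 0 ≤ z := by rw [hz]; exact le_inf (abs_nonneg _) (abs_nonneg _)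
    have hzabs : |z| = z := abs_of_nonneg hz0
    have hzI : z ∈ I := by
      refine hI.solid z w ?_ hwI
      show F.fabs z ≤ F.fabs w
      rw [habs, habs, hzabs, hz]
      exact inf_le_right
    refine ⟨z, hzI, hne, ?_⟩
    show F.fabs z ≤ F.fabs x
    rw [habs, habs, hzabs, hz]
    exact inf_le_left
  refine ⟨⟨hdcomp _, ?_, ?_⟩, ?_, ?_⟩
  · -- every nonzero x in I^{dd} dominates a nonzero element of I
    intro x hx hxne
    refine hkey x ?_
    intro hxd
    have := hx x hxd
    rw [hinf, habs, inf_idem] at this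
    exact hxne (habs0 x this)
  · -- largest such ideal
    intro J hJ hprop x hxJ
    intro w hw
    by_contra hne
    set z := F.inf (F.fabs x) (F.fabs w) with hzdef
    have hz : z = |x| ⊓ |w| := by rw [hzdef, hinf, habs, habs]
    have hz0 : 0 ≤ z := by rw [hz]; exact le_inf (abs_nonneg _) (abs_nonneg _)
    have hzabs : |z| = z := abs_of_nonneg hz0
    have hzJ : z ∈ J := by
      refine hJ.solid z x ?_ hxJ
      show F.fabs z ≤ F.fabs x
      rw [habs, habs, hzabs, hz]
      exact inf_le_left
    obtain ⟨y, hyI, hyne, hyle⟩ := hprop z hzJ hne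
    have hyle' : |y| ≤ |w| := by
      have h1 : F.fabs y ≤ F.fabs z := hyle
      rw [habs, habs, hzabs, hz] at h1
      exact h1.trans inf_le_right
    have hw0 : |w| ⊓ |y| = 0 := by rw [← habs, ← habs, ← hinf]; exact hw y hyI
    have : |y| = 0 :=
      le_antisymm ((le_inf hyle' le_rfl).trans hw0.le) (abs_nonneg y)
    exact hyne (habs0 y this)
  · -- I^d = {0} → order density property
    intro h x hxne
    refine hkey x ?_
    intro hxd
    rw [h] at hxd
    exact hxne hxd
  · -- order density property → I^d = {0}
    intro h
    refine Set.eq_singleton_iff_unique_mem.mpr ⟨(hdcomp I).zero_mem, ?_⟩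
    intro x hx
    by_contra hxne
    obtain ⟨y, hyI, hyne, hyle⟩ := h x hxne
    have hyle' : |y| ≤ |x| := by rw [← habs, ← habs]; exact hyle
    have hx0 : |x| ⊓ |y| = 0 := by rw [← habs, ← habs, ← hinf]; exact hx y hyI
    have : |y| = 0 :=
      le_antisymm ((le_inf hyle' le_rfl).trans hx0.le) (abs_nonneg y)
    exact hyne (habs0 y this)
end
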